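/- Approximation error of the weighted proximal operator of MCP/ℓ₂: Let D = diag(d₁,…,dₙ) with dᵢ > 0 and d_min = minᵢ dᵢ, α, β, λ > 0 with α < βd_min, x ∈ ℝⁿ, and let θ* > 0 satisfy β²Σᵢ [dᵢxᵢ/((dᵢβ − α)θ* + αβλ)]² = 1. If θ̃ > 0 satisfies |θ̃ − θ*| ≤ ε, and z̃ᵢ = dᵢβθ̃xᵢ/((dᵢβ − α)θ̃ + αβλ), zᵢ* = dᵢβθ*xᵢ/((dᵢβ − α)θ* + αβλ), then ‖z̃ − z*‖₂ ≤ ε. -/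

import Mathlib

/-- Approximation error of the weighted proximal operator of MCP/ℓ₂: if
`|θ̃ − θ*| ≤ ε` where `θ*` solves the normalization equation, then the induced
error on the proximal point is at most `ε` in the Euclidean norm. -/
theorem stmt_14 (n : ℕ) (d x : Fin n → ℝ) (hd : ∀ i, 0 < d i) (α β lam ε θs θt : ℝ)
    (hα : 0 < α) (hβ : 1 < β) (hlam : 0 < lam) (hε : 0 < ε)
    (hαβ : ∀ i, α < β * d i)
    (hθs : 0 < θs)
    (heq : β^2 * ∑ i, (d i * x i / ((d i * β - α) * θs + α * β * lam))^2 = 1)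
    (hθt : 0 < θt) (happrox : |θt - θs| ≤ ε) :
    Real.sqrt (∑ i, (d i * β * θt * x i / ((d i * β - α) * θt + α * β * lam) -
        d i * β * θs * x i / ((d i * β - α) * θs + α * β * lam))^2) ≤ ε := by
  have hc : 0 < α * β * lam := by positivity
  have ha : ∀ i, 0 < d i * β - α := fun i => by have := hαβ i; nlinarith
  have hP : ∀ i, 0 < (d i * β - α) * θt + α * β * lam := fun i => by
    have := ha i; nlinarith
  have hQ : ∀ i, 0 < (d i * β - α) * θs + α * β * lam := fun i => by
    have := ha i; nlinarith
  have hsum : (∑ i, (d i * β * θt * x i / ((d i * β - α) * θt + α * β * lam) -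
      d i * β * θs * x i / ((d i * β - α) * θs + α * β * lam))^2) ≤ ε^2 := by
    calc ∑ i, (d i * β * θt * x i / ((d i * β - α) * θt + α * β * lam) -
          d i * β * θs * x i / ((d i * β - α) * θs + α * β * lam))^2
        ≤ ∑ i, (θt - θs)^2 * (β^2 *
            (d i * x i / ((d i * β - α) * θs + α * β * lam))^2) := by
          apply Finset.sum_le_sum
          intro i _
          have hPi := hP i
          have hQi := hQ i
          have hterm : d i * β * θt * x i / ((d i * β - α) * θt + α * β * lam) -
              d i * β * θs * x i / ((d i * β - α) * θs + α * β * lam)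
              = d i * x i * β * (α * β * lam) * (θt - θs) /
                (((d i * β - α) * θt + α * β * lam) *
                 ((d i * β - α) * θs + α * β * lam)) := by
            rw [div_sub_div _ _ hPi.ne' hQi.ne']
            ring
          rw [hterm]
          have h1 : (d i * x i * β * (α * β * lam) * (θt - θs) /
                (((d i * β - α) * θt + α * β * lam) *
                 ((d i * β - α) * θs + α * β * lam)))^2
              = ((θt - θs)^2 * (β^2 *
                  (d i * x i / ((d i * β - α) * θs + α * β * lam))^2)) *
                ((α * β * lam) / ((d i * β - α) * θt + α * β * lam))^2 := by
            field_simp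
          rw [h1]
          have h2 : ((α * β * lam) / ((d i * β - α) * θt + α * β * lam))^2 ≤ 1 := by
            have hle : (α * β * lam) / ((d i * β - α) * θt + α * β * lam) ≤ 1 :=
              (div_le_one hPi).2 (by nlinarith [ha i])
            have h0 : 0 ≤ (α * β * lam) / ((d i * β - α) * θt + α * β * lam) := by
              positivity
            nlinarith
          have hnn : 0 ≤ (θt - θs)^2 * (β^2 *
              (d i * x i / ((d i * β - α) * θs + α * β * lam))^2) := by positivity
          nlinarith
      _ = (θt - θs)^2 * (β^2 *
            ∑ i, (d i * x i / ((d i * β - α) * θs + α * β * lam))^2) := by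
          rw [Finset.mul_sum, Finset.mul_sum]
      _ = (θt - θs)^2 := by rw [heq]; ring
      _ ≤ ε^2 := by
          have h := abs_le.1 happrox
          nlinarith [h.1, h.2]
  calc Real.sqrt (∑ i, (d i * β * θt * x i / ((d i * β - α) * θt + α * β * lam) -
        d i * β * θs * x i / ((d i * β - α) * θs + α * β * lam))^2)
      ≤ Real.sqrt (ε^2) := Real.sqrt_le_sqrt hsum
    _ = ε := by rw [Real.sqrt_sq hε.le]
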